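/- arXiv:1603.09060 — 2 statements merged into one kernel-verified Lean document; each statement's English description precedes it below -/
import Mathlib

section
/- Classical Stein's lemma: if X ~ N(μ, σ²) and c : ℝ → ℝ is differentiable with E[|c'(X)|] < ∞ and E[|(X−μ)c(X)|] < ∞, then E[(X − μ)·c(X)] = σ²·E[c'(X)]. -/
open MeasureTheory ProbabilityTheory NNReal
open scoped ENNReal Real

lemma stein_integral_conv (μ : ℝ) {v : ℝ≥0} (hv : v ≠ 0) (g : ℝ → ℝ) :
    ∫ x, g x ∂(gaussianReal μ v)
      = ∫ x, g x * gaussianPDFReal μ v x := by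
  rw [gaussianReal_of_var_ne_zero _ hv]
  have hd : gaussianPDF μ v
      = fun x => ((Real.toNNReal (gaussianPDFReal μ v x) : ℝ≥0) : ℝ≥0∞) := rfl
  rw [hd, integral_withDensity_eq_integral_smul
    ((measurable_gaussianPDFReal μ v).real_toNNReal) g]
  congr 1
  ext x
  rw [NNReal.smul_def, smul_eq_mul,
    Real.coe_toNNReal _ (gaussianPDFReal_nonneg μ v x), mul_comm]

lemma stein_integrable_conv (μ : ℝ) {v : ℝ≥0} (hv : v ≠ 0) (g : ℝ → ℝ) :
    Integrable g (gaussianReal μ v)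
      ↔ Integrable (fun x => g x * gaussianPDFReal μ v x) volume := by
  rw [gaussianReal_of_var_ne_zero _ hv,
    integrable_withDensity_iff (measurable_gaussianPDF μ v)
      (Filter.Eventually.of_forall fun x => ENNReal.ofReal_lt_top)]
  constructor <;> intro h <;> refine h.congr (Filter.Eventually.of_forall fun x => ?_) <;>
    simp [gaussianPDF, ENNReal.toReal_ofReal (gaussianPDFReal_nonneg μ v x)]

lemma stein_pdf_hasDerivAt (μ : ℝ) {v : ℝ≥0} (hv : v ≠ 0) (x : ℝ) :
    HasDerivAt (gaussianPDFReal μ v)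
      (-((x - μ) / v) * gaussianPDFReal μ v x) x := by
  have hvp : (0 : ℝ) < v := by positivity
  have h1 : HasDerivAt (fun y : ℝ => y - μ) 1 x := (hasDerivAt_id x).sub_const μ
  have h2 : HasDerivAt (fun y : ℝ => (y - μ) ^ 2) (2 * (x - μ)) x := by
    simpa using h1.fun_pow 2
  have h3 : HasDerivAt (fun y : ℝ => -(y - μ) ^ 2 / (2 * v))
      (-(2 * (x - μ)) / (2 * v)) x := h2.neg.div_const _
  have h4 := (h3.exp).const_mul (√(2 * Real.pi * v))⁻¹
  have heq : (√(2 * Real.pi * v))⁻¹ *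
      (Real.exp (-(x - μ) ^ 2 / (2 * v)) * (-(2 * (x - μ)) / (2 * v)))
      = -((x - μ) / v) * gaussianPDFReal μ v x := by
    rw [gaussianPDFReal]
    field_simp
  rw [heq] at h4
  exact h4

theorem classical_stein_lemma (μ : ℝ) (v : ℝ≥0) (hv : v ≠ 0) (c : ℝ → ℝ)
    (hc : Differentiable ℝ c)
    (h1 : Integrable (fun x => |deriv c x|) (gaussianReal μ v))
    (h2 : Integrable (fun x => |(x - μ) * c x|) (gaussianReal μ v)) :
    ∫ x, (x - μ) * c x ∂(gaussianReal μ v)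
      = (v : ℝ) * ∫ x, deriv c x ∂(gaussianReal μ v) := by
  set φ : ℝ → ℝ := gaussianPDFReal μ v with hφ
  have hvp : (0 : ℝ) < v := by positivity
  have hφmeas : Measurable φ := measurable_gaussianPDFReal μ v
  have hφnn : ∀ x, 0 ≤ φ x := gaussianPDFReal_nonneg μ v
  -- integrability of |deriv c| * φ and |(x-μ) c| * φ on volume
  have h1' : Integrable (fun x => |deriv c x| * φ x) volume :=
    (stein_integrable_conv μ hv _).mp h1
  have h2' : Integrable (fun x => |(x - μ) * c x| * φ x) volume :=
    (stein_integrable_conv μ hv _).mp h2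
  have hcderiv_meas : Measurable (deriv c) := measurable_deriv c
  -- integrable: deriv c * φ
  have hA : Integrable (fun x => deriv c x * φ x) volume := by
    refine Integrable.mono' h1' ((hcderiv_meas.mul hφmeas).aestronglyMeasurable)
      (Filter.Eventually.of_forall fun x => ?_)
    rw [Real.norm_eq_abs, abs_mul, abs_of_nonneg (hφnn x)]
  -- integrable: (x-μ) * c x * φ
  have hB : Integrable (fun x => (x - μ) * c x * φ x) volume := by
    refine Integrable.mono' h2' ((((measurable_id.sub_const μ).mul
      hc.continuous.measurable).mul hφmeas).aestronglyMeasurable)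
      (Filter.Eventually.of_forall fun x => ?_)
    rw [Real.norm_eq_abs, abs_mul, abs_of_nonneg (hφnn x)]
  -- integrable: c * φ
  obtain ⟨M, hM⟩ := (isCompact_Icc (a := μ - 1) (b := μ + 1)).exists_bound_of_continuousOn
    hc.continuous.continuousOn
  have hM0 : 0 ≤ M := le_trans (norm_nonneg _) (hM μ (by constructor <;> linarith))
  have hbound : Integrable (fun x => M * φ x + |(x - μ) * c x| * φ x) volume :=
    ((integrable_gaussianPDFReal μ v).const_mul M).add h2'
  have hg : Integrable (fun x => c x * φ x) volume := by
    refine Integrable.mono' hbound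
      ((hc.continuous.measurable.mul hφmeas).aestronglyMeasurable)
      (Filter.Eventually.of_forall fun x => ?_)
    rw [Real.norm_eq_abs, abs_mul, abs_of_nonneg (hφnn x)]
    rcases le_or_gt |x - μ| 1 with h | h
    · have hx : x ∈ Set.Icc (μ - 1) (μ + 1) := by
        rw [abs_le] at h
        constructor <;> linarith [h.1, h.2]
      have := hM x hx
      rw [Real.norm_eq_abs] at this
      nlinarith [hφnn x, abs_nonneg ((x - μ) * c x), mul_le_mul_of_nonneg_right this (hφnn x)]
    · have h1x : |c x| ≤ |(x - μ) * c x| := by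
        rw [abs_mul]
        nlinarith [abs_nonneg (c x)]
      nlinarith [hφnn x, mul_le_mul_of_nonneg_right h1x (hφnn x), mul_nonneg hM0 (hφnn x)]
  -- derivative of c * φ
  have hderiv : ∀ x, HasDerivAt (fun y => c y * φ y)
      (deriv c x * φ x + c x * (-((x - μ) / v) * φ x)) x :=
    fun x => ((hc x).hasDerivAt).mul (stein_pdf_hasDerivAt μ hv x)
  have hsecond : Integrable (fun x => c x * (-((x - μ) / v) * φ x)) volume := by
    refine (hB.const_mul (-(v : ℝ)⁻¹)).congr ?_
    refine Filter.Eventually.of_forall fun x => ?_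
    field_simp
  have hint : Integrable
      (fun x => deriv c x * φ x + c x * (-((x - μ) / v) * φ x)) volume := hA.add hsecond
  have hzero : ∫ x, (deriv c x * φ x + c x * (-((x - μ) / v) * φ x)) = 0 :=
    integral_eq_zero_of_hasDerivAt_of_integrable hderiv hint hg
  rw [integral_add hA hsecond] at hzero
  have hsec_eq : ∫ x, c x * (-((x - μ) / v) * φ x)
      = -(v : ℝ)⁻¹ * ∫ x, (x - μ) * c x * φ x := by
    rw [← integral_const_mul]
    refine integral_congr_ae (Filter.Eventually.of_forall fun x => ?_)
    field_simp
  rw [hsec_eq] at hzero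
  rw [stein_integral_conv μ hv, stein_integral_conv μ hv]
  have : ∫ x, deriv c x * φ x = (v : ℝ)⁻¹ * ∫ x, (x - μ) * c x * φ x := by linarith
  rw [this]
  field_simp
  rfl
end

section
/- Bivariate Gaussian Stein lemma: if (X,Y) is jointly Gaussian and c : ℝ → ℝ is continuously differentiable with E[|c'(X)|] < ∞, then Cov[c(X), Y] = E[c'(X)]·Cov[X, Y]. -/
open MeasureTheory

/-- The density of a bivariate normal distribution with means `μX, μY`,
standard deviations `σX, σY` and correlation `ρ`. -/
noncomputable def biGaussianPDF (μX μY σX σY ρ : ℝ) (x y : ℝ) : ℝ :=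
  (2 * Real.pi * σX * σY * Real.sqrt (1 - ρ ^ 2))⁻¹ *
    Real.exp (-(1 / (2 * (1 - ρ ^ 2))) *
      ((x - μX) ^ 2 / σX ^ 2 - 2 * ρ * (x - μX) * (y - μY) / (σX * σY)
        + (y - μY) ^ 2 / σY ^ 2))

open MeasureTheory Real Set Filter
open scoped NNReal ENNReal

noncomputable def gpdf (m s x : ℝ) : ℝ :=
  (Real.sqrt (2 * Real.pi * s))⁻¹ * Real.exp (-(x - m) ^ 2 / (2 * s))

lemma gpdf_eq (m : ℝ) {s : ℝ} (hs : 0 < s) :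
    gpdf m s = ProbabilityTheory.gaussianPDFReal m s.toNNReal := by
  ext x
  rw [ProbabilityTheory.gaussianPDFReal, Real.coe_toNNReal _ hs.le]
  rfl

lemma gpdf_nonneg (m s x : ℝ) : 0 ≤ gpdf m s x := by
  unfold gpdf; positivity

lemma continuous_gpdf (m s : ℝ) : Continuous (gpdf m s) := by
  unfold gpdf; fun_prop

lemma measurable_gpdf (m s : ℝ) : Measurable (gpdf m s) :=
  (continuous_gpdf m s).measurable

lemma integrable_gpdf (m : ℝ) {s : ℝ} (hs : 0 < s) : Integrable (gpdf m s) := by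
  rw [gpdf_eq m hs]
  exact ProbabilityTheory.integrable_gaussianPDFReal m s.toNNReal

lemma integral_gpdf (m : ℝ) {s : ℝ} (hs : 0 < s) : ∫ x, gpdf m s x = 1 := by
  rw [gpdf_eq m hs]
  exact ProbabilityTheory.integral_gaussianPDFReal_eq_one m
    (by simp [Real.toNNReal_eq_zero, not_le, hs])

lemma hasDerivAt_gpdf (m : ℝ) {s : ℝ} (hs : 0 < s) (x : ℝ) :
    HasDerivAt (gpdf m s) (-(x - m) / s * gpdf m s x) x := by
  have h1 : HasDerivAt (fun x : ℝ => -(x - m) ^ 2 / (2 * s))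
      (-(x - m) / s) x := by
    have := (((hasDerivAt_id x).sub_const m).pow 2).neg.div_const (2 * s)
    refine this.congr_deriv ?_
    field_simp
    simp only [id]
    ring
  have := (h1.exp).const_mul (Real.sqrt (2 * Real.pi * s))⁻¹
  refine this.congr_deriv ?_
  unfold gpdf
  ring

lemma tendsto_gpdf_atTop (m : ℝ) {s : ℝ} (hs : 0 < s) :
    Tendsto (gpdf m s) atTop (nhds 0) := by
  have h1 : Tendsto (fun x : ℝ => -(x - m) ^ 2 / (2 * s)) atTop atBot := by
    apply Tendsto.atBot_div_const (by positivity)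
    have hp : Tendsto (fun x : ℝ => (x - m) ^ 2) atTop atTop :=
      (tendsto_pow_atTop two_ne_zero).comp
        (tendsto_atTop_add_const_right _ (-m) (tendsto_id (α := ℝ)) |>.congr (by intro x; simp [sub_eq_add_neg]))
    simpa using tendsto_neg_atBot_iff.mpr hp
  have := (Real.tendsto_exp_atBot.comp h1).const_mul (Real.sqrt (2 * Real.pi * s))⁻¹
  unfold gpdf
  simpa [gpdf, Function.comp] using this

lemma integrable_linear_gpdf (m : ℝ) {s : ℝ} (hs : 0 < s) (a : ℝ) :
    Integrable (fun x => (x - a) * gpdf m s x) := by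
  have key : Integrable (fun x => (x - m) * gpdf m s x) := by
    have hb : (0:ℝ) < (2 * s)⁻¹ := by positivity
    have h1 : Integrable (fun t : ℝ =>
        (Real.sqrt (2 * Real.pi * s))⁻¹ * (t * Real.exp (-(2*s)⁻¹ * t ^ 2))) :=
      (integrable_mul_exp_neg_mul_sq hb).const_mul _
    have h2 := h1.comp_sub_right m
    apply h2.congr
    apply Eventually.of_forall
    intro x
    have : -(2*s)⁻¹ * (x - m) ^ 2 = -(x - m) ^ 2 / (2 * s) := by ring
    simp only [this, gpdf]
    ring
  have key2 : Integrable (fun x => (m - a) * gpdf m s x) := by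
    rw [gpdf_eq m hs]
    exact (ProbabilityTheory.integrable_gaussianPDFReal m s.toNNReal).const_mul _
  apply (key.add key2).congr
  apply Eventually.of_forall
  intro x
  simp only [Pi.add_apply]
  ring

lemma tail_Ioi_gpdf (m : ℝ) {s : ℝ} (hs : 0 < s) (t : ℝ) :
    ∫ x in Ioi t, (x - m) * gpdf m s x = s * gpdf m s t := by
  have hderiv : ∀ x ∈ Ici t, HasDerivAt (fun x => -s * gpdf m s x)
      ((x - m) * gpdf m s x) x := by
    intro x _
    have := (hasDerivAt_gpdf m hs x).const_mul (-s)
    refine this.congr_deriv ?_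
    field_simp
  have hint : IntegrableOn (fun x => (x - m) * gpdf m s x) (Ioi t) :=
    (integrable_linear_gpdf m hs m).integrableOn
  have htend : Tendsto (fun x => -s * gpdf m s x) atTop (nhds 0) := by
    have := (tendsto_gpdf_atTop m hs).const_mul (-s)
    simpa using this
  have := integral_Ioi_of_hasDerivAt_of_tendsto' hderiv hint htend
  rw [this]; ring

lemma gpdf_neg (m s x : ℝ) : gpdf m s (-x) = gpdf (-m) s x := by
  unfold gpdf
  congr 2
  ring

lemma tail_Iic_gpdf (m : ℝ) {s : ℝ} (hs : 0 < s) (t : ℝ) :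
    ∫ x in Iic t, (x - m) * gpdf m s x = -(s * gpdf m s t) := by
  have h := integral_comp_neg_Ioi (-t) (fun x => (x - m) * gpdf m s x)
  rw [neg_neg] at h
  rw [← h]
  have : ∀ x : ℝ, (-x - m) * gpdf m s (-x) = -((x - -m) * gpdf (-m) s x) := by
    intro x; rw [gpdf_neg]; ring
  simp_rw [this]
  rw [integral_neg, tail_Ioi_gpdf (-m) hs (-t)]
  congr 1
  have : gpdf (-m) s (-t) = gpdf m s t := by rw [← gpdf_neg]; simp
  rw [this]

lemma integral_centered_gpdf (m : ℝ) {s : ℝ} (hs : 0 < s) :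
    ∫ x, (x - m) * gpdf m s x = 0 := by
  have h1 : ∫ x in Iio m, (x - m) * gpdf m s x = -(s * gpdf m s m) := by
    rw [← integral_Iic_eq_integral_Iio]; exact tail_Iic_gpdf m hs m
  have h2 : ∫ x in Ici m, (x - m) * gpdf m s x = s * gpdf m s m := by
    rw [integral_Ici_eq_integral_Ioi]; exact tail_Ioi_gpdf m hs m
  rw [← intervalIntegral.integral_Iio_add_Ici ((integrable_linear_gpdf m hs m).integrableOn)
    ((integrable_linear_gpdf m hs m).integrableOn), h1, h2]
  ring

lemma integral_linear_gpdf (m : ℝ) {s : ℝ} (hs : 0 < s) (a : ℝ) :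
    ∫ x, (x - a) * gpdf m s x = m - a := by
  have : ∀ x : ℝ, (x - a) * gpdf m s x = (x - m) * gpdf m s x + (m - a) * gpdf m s x := by
    intro x; ring
  simp_rw [this]
  rw [integral_add (integrable_linear_gpdf m hs m)
    ((integrable_gpdf m hs).const_mul _), integral_centered_gpdf m hs,
    integral_const_mul, integral_gpdf m hs]
  ring

lemma ae_ne_real (m : ℝ) : ∀ᵐ t : ℝ, t ≠ m := by
  have h : {t : ℝ | ¬ t ≠ m} = {m} := by ext t; simp
  rw [ae_iff, h]
  exact Real.volume_singleton

lemma stein_one_dim {c : ℝ → ℝ} (hc : ContDiff ℝ 1 c) {m s : ℝ} (hs : 0 < s) (K : ℝ)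
    (h1 : Integrable (fun x => (c x - K) * (x - m) * gpdf m s x))
    (h2 : Integrable (fun x => |deriv c x| * gpdf m s x)) :
    ∫ x, (c x - K) * (x - m) * gpdf m s x = s * ∫ x, deriv c x * gpdf m s x := by
  have hc' : Continuous (deriv c) := hc.continuous_deriv le_rfl
  have hder : ∀ x : ℝ, HasDerivAt c (deriv c x) x :=
    fun x => (hc.differentiable one_ne_zero x).hasDerivAt
  -- the kernel
  set F : ℝ × ℝ → ℝ := fun p => deriv c p.1 * ((p.2 - m) * gpdf m s p.2) with hF_def
  set S1 : Set (ℝ × ℝ) := {p | m ≤ p.1 ∧ p.1 ≤ p.2} with hS1_def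
  set S2 : Set (ℝ × ℝ) := {p | p.2 ≤ p.1 ∧ p.1 ≤ m} with hS2_def
  set H : ℝ × ℝ → ℝ := fun p => S1.indicator F p - S2.indicator F p with hH_def
  have hS1 : MeasurableSet S1 := by
    have : S1 = {p : ℝ × ℝ | m ≤ p.1} ∩ {p : ℝ × ℝ | p.1 ≤ p.2} := by
      ext p; simp [hS1_def, Set.mem_setOf_eq]
    rw [this]
    exact (measurableSet_le measurable_const measurable_fst).inter
      (measurableSet_le measurable_fst measurable_snd)
  have hS2 : MeasurableSet S2 := by
    have : S2 = {p : ℝ × ℝ | p.2 ≤ p.1} ∩ {p : ℝ × ℝ | p.1 ≤ m} := by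
      ext p; simp [hS2_def, Set.mem_setOf_eq]
    rw [this]
    exact (measurableSet_le measurable_snd measurable_fst).inter
      (measurableSet_le measurable_fst measurable_const)
  have hFc : Continuous F :=
    (hc'.comp continuous_fst).mul
      ((continuous_snd.sub continuous_const).mul ((continuous_gpdf m s).comp continuous_snd))
  have hHm : AEStronglyMeasurable H (volume.prod volume) :=
    ((hFc.measurable.indicator hS1).sub (hFc.measurable.indicator hS2)).aestronglyMeasurable
  -- slices in the second variable
  have hsliceO : ∀ t : ℝ, m < t → (fun x => H (t, x))
      = fun x => (Ici t).indicator (fun x => deriv c t * ((x - m) * gpdf m s x)) x := by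
    intro t ht
    funext x
    simp only [hH_def, hS1_def, hS2_def, Set.indicator_apply, Set.mem_setOf_eq, Set.mem_Ici]
    have h1' : m ≤ t := ht.le
    have h2' : ¬ (t ≤ m) := not_le.mpr ht
    simp [h1', h2', hF_def]
  have hsliceI : ∀ t : ℝ, t < m → (fun x => H (t, x))
      = fun x => - (Iic t).indicator (fun x => deriv c t * ((x - m) * gpdf m s x)) x := by
    intro t ht
    funext x
    simp only [hH_def, hS1_def, hS2_def, Set.indicator_apply, Set.mem_setOf_eq, Set.mem_Iic]
    have h1' : ¬ (m ≤ t) := not_le.mpr ht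
    have h2' : t ≤ m := ht.le
    simp [h1', h2', hF_def]
  have hbase : ∀ t : ℝ, Integrable (fun x => deriv c t * ((x - m) * gpdf m s x)) := by
    intro t
    exact ((integrable_linear_gpdf m hs m).const_mul _)
  -- integral of the slice and its norm, for t ≠ m
  have hIoi_val : ∀ t : ℝ, ∫ x in Ici t, deriv c t * ((x - m) * gpdf m s x)
      = deriv c t * (s * gpdf m s t) := by
    intro t
    rw [integral_Ici_eq_integral_Ioi, integral_const_mul, tail_Ioi_gpdf m hs t]
  have hIic_val : ∀ t : ℝ, ∫ x in Iic t, deriv c t * ((x - m) * gpdf m s x)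
      = deriv c t * (-(s * gpdf m s t)) := by
    intro t
    rw [integral_const_mul, tail_Iic_gpdf m hs t]
  have hslice_int : ∀ t : ℝ, t ≠ m → ∫ x, H (t, x) = deriv c t * (s * gpdf m s t) := by
    intro t ht
    rcases lt_or_gt_of_ne ht with h | h
    · rw [hsliceI t h, integral_neg, integral_indicator measurableSet_Iic, hIic_val t]
      ring
    · rw [hsliceO t h, integral_indicator measurableSet_Ici, hIoi_val t]
  have hslice_norm : ∀ t : ℝ, t ≠ m → ∫ x, ‖H (t, x)‖ = |deriv c t| * (s * gpdf m s t) := by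
    intro t ht
    rcases lt_or_gt_of_ne ht with h | h
    · simp only [congrFun (hsliceI t h)]
      simp only [norm_neg]
      rw [show (fun x => ‖(Iic t).indicator (fun x => deriv c t * ((x - m) * gpdf m s x)) x‖)
          = fun x => (Iic t).indicator (fun x => ‖deriv c t * ((x - m) * gpdf m s x)‖) x from
          funext fun x => norm_indicator_eq_indicator_norm _ x]
      rw [integral_indicator measurableSet_Iic]
      rw [setIntegral_congr_fun measurableSet_Iic
        (g := fun x => |deriv c t| * ((m - x) * gpdf m s x)) ?_]
      · rw [integral_const_mul]
        have : ∫ x in Iic t, (m - x) * gpdf m s x = s * gpdf m s t := by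
          rw [show (fun x => (m - x) * gpdf m s x) = fun x => -((x - m) * gpdf m s x) from
            funext fun x => by ring, integral_neg, tail_Iic_gpdf m hs t, neg_neg]
        rw [this]
      · intro x hx
        simp only [Set.mem_Iic] at hx
        simp only [Real.norm_eq_abs, abs_mul, abs_of_nonneg (gpdf_nonneg m s x),
          abs_of_nonpos (by linarith : x - m ≤ 0)]
        ring
    · simp only [congrFun (hsliceO t h)]
      rw [show (fun x => ‖(Ici t).indicator (fun x => deriv c t * ((x - m) * gpdf m s x)) x‖)
          = fun x => (Ici t).indicator (fun x => ‖deriv c t * ((x - m) * gpdf m s x)‖) x from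
          funext fun x => norm_indicator_eq_indicator_norm _ x]
      rw [integral_indicator measurableSet_Ici]
      rw [setIntegral_congr_fun measurableSet_Ici
        (g := fun x => |deriv c t| * ((x - m) * gpdf m s x)) ?_]
      · rw [integral_const_mul, integral_Ici_eq_integral_Ioi, tail_Ioi_gpdf m hs t]
      · intro x hx
        simp only [Set.mem_Ici] at hx
        simp only [Real.norm_eq_abs, abs_mul, abs_of_nonneg (gpdf_nonneg m s x),
          abs_of_nonneg (by linarith : (0:ℝ) ≤ x - m)]
  have hslice_integrable : ∀ t : ℝ, Integrable (fun x => H (t, x)) := by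
    intro t
    rcases lt_trichotomy t m with h | h | h
    · rw [hsliceI t h]
      exact (((hbase t).indicator measurableSet_Iic)).neg
    · have : (fun x => H (t, x)) = fun x =>
          ({x : ℝ | t ≤ x}).indicator (fun x => deriv c t * ((x - m) * gpdf m s x)) x
          - ({x : ℝ | x ≤ t}).indicator (fun x => deriv c t * ((x - m) * gpdf m s x)) x := by
        funext x
        simp only [hH_def, hS1_def, hS2_def, Set.indicator_apply, Set.mem_setOf_eq, hF_def, h,
          le_refl, true_and, and_true]
      rw [this]
      exact (((hbase t).indicator (measurableSet_le measurable_const measurable_id))).sub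
        (((hbase t).indicator (measurableSet_le measurable_id measurable_const)))
    · rw [hsliceO t h]
      exact ((hbase t).indicator measurableSet_Ici)
  -- integrability on the product
  have hgood : Integrable (fun t => |deriv c t| * (s * gpdf m s t)) := by
    have := (h2.const_mul s)
    apply this.congr
    apply Eventually.of_forall
    intro t
    ring
  have hHint : Integrable H (volume.prod volume) := by
    rw [integrable_prod_iff hHm]
    constructor
    · exact Eventually.of_forall fun t => hslice_integrable t
    · apply hgood.congr
      filter_upwards [ae_ne_real m] with t ht
      exact (hslice_norm t ht).symm
  -- swap the order of integration
  have hswap : ∫ t, ∫ x, H (t, x) = ∫ x, ∫ t, H (t, x) := by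
    exact integral_integral_swap (f := fun t x => H (t, x)) hHint
  -- value of the t-outer iterated integral
  have hA : ∫ t, ∫ x, H (t, x) = s * ∫ x, deriv c x * gpdf m s x := by
    rw [integral_congr_ae (g := fun t => s * (deriv c t * gpdf m s t)) ?_]
    · exact integral_const_mul s _
    · filter_upwards [ae_ne_real m] with t ht
      rw [hslice_int t ht]; ring
  -- value of the x-outer iterated integral
  have hB : ∫ x, ∫ t, H (t, x) = ∫ x, (c x - c m) * ((x - m) * gpdf m s x) := by
    congr 1
    funext x
    have hslB : (fun t => H (t, x)) = fun t =>
        (Icc m x).indicator (fun t => deriv c t * ((x - m) * gpdf m s x)) t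
        - (Icc x m).indicator (fun t => deriv c t * ((x - m) * gpdf m s x)) t := by
      funext t
      simp only [hH_def, hS1_def, hS2_def, Set.indicator_apply, Set.mem_setOf_eq, Set.mem_Icc,
        hF_def]
    rw [hslB]
    have hi1 : Integrable ((Icc m x).indicator (fun t => deriv c t * ((x - m) * gpdf m s x))) := by
      apply (Continuous.integrableOn_Icc (by fun_prop)).integrable_indicator measurableSet_Icc
    have hi2 : Integrable ((Icc x m).indicator (fun t => deriv c t * ((x - m) * gpdf m s x))) := by
      apply (Continuous.integrableOn_Icc (by fun_prop)).integrable_indicator measurableSet_Icc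
    rw [integral_sub hi1 hi2, integral_indicator measurableSet_Icc,
      integral_indicator measurableSet_Icc]
    have hccint : ∀ a b : ℝ, a ≤ b → ∫ t in Icc a b, deriv c t * ((x - m) * gpdf m s x)
        = (c b - c a) * ((x - m) * gpdf m s x) := by
      intro a b hab
      rw [integral_Icc_eq_integral_Ioc, ← intervalIntegral.integral_of_le hab,
        intervalIntegral.integral_mul_const,
        intervalIntegral.integral_deriv_eq_sub (fun y _ => hc.differentiable one_ne_zero y)
          (hc'.intervalIntegrable a b)]
    rcases le_total m x with hmx | hxm
    · rw [hccint m x hmx]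
      have : ∫ t in Icc x m, deriv c t * ((x - m) * gpdf m s x) = 0 := by
        have hz : volume.restrict (Icc x m) = 0 := Measure.restrict_eq_zero.2
          (by rw [Real.volume_Icc]; exact ENNReal.ofReal_eq_zero.mpr (by linarith))
        rw [hz]; exact integral_zero_measure _
      rw [this]; ring
    · rw [hccint x m hxm]
      have : ∫ t in Icc m x, deriv c t * ((x - m) * gpdf m s x) = 0 := by
        have hz : volume.restrict (Icc m x) = 0 := Measure.restrict_eq_zero.2
          (by rw [Real.volume_Icc]; exact ENNReal.ofReal_eq_zero.mpr (by linarith))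
        rw [hz]; exact integral_zero_measure _
      rw [this]; ring
  -- main identity with K = c m
  have hmain : ∫ x, (c x - c m) * ((x - m) * gpdf m s x) = s * ∫ x, deriv c x * gpdf m s x := by
    rw [← hB, ← hswap, hA]
  -- reduce general K to c m
  have hlin : Integrable (fun x => (c m - K) * ((x - m) * gpdf m s x)) :=
    (integrable_linear_gpdf m hs m).const_mul _
  have hcm : Integrable (fun x => (c x - c m) * ((x - m) * gpdf m s x)) := by
    apply (h1.sub hlin).congr
    apply Eventually.of_forall
    intro x
    simp only [Pi.sub_apply]
    ring
  have hsplit : (fun x => (c x - K) * (x - m) * gpdf m s x)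
      = fun x => (c x - c m) * ((x - m) * gpdf m s x) + (c m - K) * ((x - m) * gpdf m s x) := by
    funext x; ring
  rw [hsplit, integral_add hcm hlin, hmain, integral_const_mul, integral_centered_gpdf m hs]
  ring

lemma biGaussian_decomp {μX μY σX σY ρ : ℝ} (hσX : 0 < σX) (hσY : 0 < σY)
    (hρ : ρ ^ 2 < 1) (x y : ℝ) :
    biGaussianPDF μX μY σX σY ρ x y
      = gpdf μX (σX ^ 2) x * gpdf (μY + ρ * σY / σX * (x - μX)) (σY ^ 2 * (1 - ρ ^ 2)) y := by
  have h1 : (0:ℝ) < 1 - ρ ^ 2 := by linarith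
  have h2π : (0:ℝ) ≤ 2 * Real.pi := by positivity
  unfold biGaussianPDF gpdf
  have hC1 : Real.sqrt (2 * Real.pi * σX ^ 2) = Real.sqrt (2 * Real.pi) * σX := by
    rw [Real.sqrt_mul h2π, Real.sqrt_sq hσX.le]
  have hC2 : Real.sqrt (2 * Real.pi * (σY ^ 2 * (1 - ρ ^ 2)))
      = Real.sqrt (2 * Real.pi) * σY * Real.sqrt (1 - ρ ^ 2) := by
    rw [show 2 * Real.pi * (σY ^ 2 * (1 - ρ ^ 2)) = 2 * Real.pi * σY ^ 2 * (1 - ρ ^ 2) by ring,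
      Real.sqrt_mul (by positivity), Real.sqrt_mul h2π, Real.sqrt_sq hσY.le]
  have hsq : Real.sqrt (2 * Real.pi) * Real.sqrt (2 * Real.pi) = 2 * Real.pi :=
    Real.mul_self_sqrt h2π
  rw [hC1, hC2, show ∀ a b c d : ℝ, a * Real.exp b * (c * Real.exp d) = (a*c) * Real.exp (b+d)
    from fun a b c d => by rw [Real.exp_add]; ring]
  have hexp : -(1 / (2 * (1 - ρ ^ 2))) *
      ((x - μX) ^ 2 / σX ^ 2 - 2 * ρ * (x - μX) * (y - μY) / (σX * σY)
        + (y - μY) ^ 2 / σY ^ 2)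
      = -(x - μX) ^ 2 / (2 * σX ^ 2)
        + -(y - (μY + ρ * σY / σX * (x - μX))) ^ 2 / (2 * (σY ^ 2 * (1 - ρ ^ 2))) := by
    field_simp
    ring
  have hconst : ((2 : ℝ) * Real.pi * σX * σY * Real.sqrt (1 - ρ ^ 2))⁻¹
      = (Real.sqrt (2 * Real.pi) * σX)⁻¹ *
        (Real.sqrt (2 * Real.pi) * σY * Real.sqrt (1 - ρ ^ 2))⁻¹ := by
    rw [← mul_inv]
    congr 1
    rw [show Real.sqrt (2*Real.pi) * σX * (Real.sqrt (2*Real.pi) * σY * Real.sqrt (1 - ρ^2))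
      = (Real.sqrt (2*Real.pi) * Real.sqrt (2*Real.pi)) * σX * σY * Real.sqrt (1-ρ^2) by ring, hsq]
  rw [hexp, hconst]

theorem bivariate_gaussian_stein_lemma
    {Ω : Type*} [MeasurableSpace Ω] (ℙ : Measure Ω) [IsProbabilityMeasure ℙ]
    (X Y : Ω → ℝ) (hX : Measurable X) (hY : Measurable Y)
    (μX μY σX σY ρ : ℝ) (hσX : 0 < σX) (hσY : 0 < σY) (hρ : ρ ^ 2 < 1)
    (hjoint : Measure.map (fun ω => (X ω, Y ω)) ℙ
      = volume.withDensity (fun p => ENNReal.ofReal (biGaussianPDF μX μY σX σY ρ p.1 p.2)))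
    (c : ℝ → ℝ) (hc : ContDiff ℝ 1 c)
    (hintc : Integrable (fun ω => c (X ω)) ℙ)
    (hintc' : Integrable (fun ω => |deriv c (X ω)|) ℙ)
    (hintcov : Integrable (fun ω => (c (X ω) - ∫ ω', c (X ω') ∂ℙ) * (Y ω - μY)) ℙ) :
    ∫ ω, (c (X ω) - ∫ ω', c (X ω') ∂ℙ) * (Y ω - μY) ∂ℙ
      = (∫ ω, deriv c (X ω) ∂ℙ) * (ρ * σX * σY) := by
  have hc' : Continuous (deriv c) := hc.continuous_deriv le_rfl
  have hcc : Continuous c := hc.continuous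
  set Ec : ℝ := ∫ ω', c (X ω') ∂ℙ with hEc
  set f2 : ℝ × ℝ → ℝ := fun p => biGaussianPDF μX μY σX σY ρ p.1 p.2 with hf2_def
  have h1ρ : (0:ℝ) < 1 - ρ ^ 2 := by linarith
  have hf2c : Continuous f2 := by
    unfold f2
    unfold biGaussianPDF
    fun_prop
  have hf2nn : ∀ p, 0 ≤ f2 p := by
    intro p
    unfold f2
    unfold biGaussianPDF
    have : (0:ℝ) ≤ (2 * Real.pi * σX * σY * Real.sqrt (1 - ρ ^ 2))⁻¹ := by positivity
    positivity
  -- decomposition of the density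
  set τ : ℝ := σY ^ 2 * (1 - ρ ^ 2) with hτ_def
  have hτ : 0 < τ := by positivity
  have hvX : (0:ℝ) < σX ^ 2 := by positivity
  have hdec : ∀ p : ℝ × ℝ, f2 p
      = gpdf μX (σX ^ 2) p.1 * gpdf (μY + ρ * σY / σX * (p.1 - μX)) τ p.2 :=
    fun p => biGaussian_decomp hσX hσY hρ p.1 p.2
  -- transfer of integrals from Ω to ℝ²
  have hXY : Measurable fun ω => (X ω, Y ω) := hX.prodMk hY
  have hofReal : (fun p => ENNReal.ofReal (biGaussianPDF μX μY σX σY ρ p.1 p.2))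
      = fun p => ((Real.toNNReal (f2 p) : ℝ≥0) : ℝ≥0∞) := rfl
  have key_int : ∀ g : ℝ × ℝ → ℝ, Measurable g →
      (Integrable (fun ω => g (X ω, Y ω)) ℙ ↔ Integrable (fun p => g p * f2 p) volume) := by
    intro g hg
    rw [show (fun ω => g (X ω, Y ω)) = g ∘ (fun ω => (X ω, Y ω)) from rfl,
      ← integrable_map_measure hg.aestronglyMeasurable hXY.aemeasurable, hjoint, hofReal,
      integrable_withDensity_iff_integrable_smul (hf2c.measurable.real_toNNReal)]
    constructor <;> intro h <;> apply h.congr <;> apply Eventually.of_forall <;> intro p <;>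
      simp only [NNReal.smul_def, smul_eq_mul, Real.coe_toNNReal _ (hf2nn p)] <;> ring
  have key_val : ∀ g : ℝ × ℝ → ℝ, Measurable g →
      ∫ ω, g (X ω, Y ω) ∂ℙ = ∫ p, g p * f2 p := by
    intro g hg
    rw [show (∫ ω, g (X ω, Y ω) ∂ℙ) = ∫ ω, g ((fun ω => (X ω, Y ω)) ω) ∂ℙ from rfl,
      ← integral_map hXY.aemeasurable hg.aestronglyMeasurable, hjoint, hofReal,
      integral_withDensity_eq_integral_smul (hf2c.measurable.real_toNNReal)]
    apply integral_congr_ae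
    apply Eventually.of_forall
    intro p
    simp only [NNReal.smul_def, smul_eq_mul, Real.coe_toNNReal _ (hf2nn p)]
    ring
  -- measurability of the integrands
  have hg2m : Measurable fun p : ℝ × ℝ => (c p.1 - Ec) * (p.2 - μY) :=
    (((hcc.comp continuous_fst).sub continuous_const).mul
      (continuous_snd.sub continuous_const)).measurable
  have hg3m : Measurable fun p : ℝ × ℝ => |deriv c p.1| :=
    ((hc'.comp continuous_fst).abs).measurable
  have hg4m : Measurable fun p : ℝ × ℝ => deriv c p.1 :=
    (hc'.comp continuous_fst).measurable
  -- transfer the hypotheses to ℝ²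
  have hcov2 : Integrable (fun p : ℝ × ℝ => (c p.1 - Ec) * (p.2 - μY) * f2 p) volume :=
    (key_int _ hg2m).mp hintcov
  have hcovval : ∫ ω, (c (X ω) - Ec) * (Y ω - μY) ∂ℙ
      = ∫ p : ℝ × ℝ, (c p.1 - Ec) * (p.2 - μY) * f2 p := key_val _ hg2m
  have habs2 : Integrable (fun p : ℝ × ℝ => |deriv c p.1| * f2 p) volume :=
    (key_int _ hg3m).mp hintc'
  have hder2 : Integrable (fun p : ℝ × ℝ => deriv c p.1 * f2 p) volume := by
    apply habs2.mono' (hg4m.mul hf2c.measurable).aestronglyMeasurable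
    apply Eventually.of_forall
    intro p
    rw [Real.norm_eq_abs, Pi.mul_apply, abs_mul, abs_of_nonneg (hf2nn p)]
  have hderval : ∫ ω, deriv c (X ω) ∂ℙ = ∫ p : ℝ × ℝ, deriv c p.1 * f2 p := key_val _ hg4m
  have hprod : (volume : Measure (ℝ × ℝ)) = (volume : Measure ℝ).prod volume :=
    Measure.volume_eq_prod ℝ ℝ
  rw [hprod] at hcov2 habs2 hder2
  -- inner integrals
  have hinner_cov : ∀ x : ℝ, ∫ y, (c x - Ec) * (y - μY) * f2 (x, y)
      = (c x - Ec) * gpdf μX (σX ^ 2) x * (ρ * σY / σX * (x - μX)) := by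
    intro x
    have h1 : ∀ y, (c x - Ec) * (y - μY) * f2 (x, y)
        = ((c x - Ec) * gpdf μX (σX ^ 2) x)
          * ((y - μY) * gpdf (μY + ρ * σY / σX * (x - μX)) τ y) := by
      intro y; rw [hdec (x, y)]; ring
    simp_rw [h1]
    rw [integral_const_mul, integral_linear_gpdf _ hτ μY]
    ring
  have hinner_abs : ∀ x : ℝ, ∫ y, |deriv c x| * f2 (x, y)
      = |deriv c x| * gpdf μX (σX ^ 2) x := by
    intro x
    have h1 : ∀ y, |deriv c x| * f2 (x, y)
        = (|deriv c x| * gpdf μX (σX ^ 2) x)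
          * gpdf (μY + ρ * σY / σX * (x - μX)) τ y := by
      intro y; rw [hdec (x, y)]; ring
    simp_rw [h1]
    rw [integral_const_mul, integral_gpdf _ hτ, mul_one]
  have hinner_der : ∀ x : ℝ, ∫ y, deriv c x * f2 (x, y)
      = deriv c x * gpdf μX (σX ^ 2) x := by
    intro x
    have h1 : ∀ y, deriv c x * f2 (x, y)
        = (deriv c x * gpdf μX (σX ^ 2) x)
          * gpdf (μY + ρ * σY / σX * (x - μX)) τ y := by
      intro y; rw [hdec (x, y)]; ring
    simp_rw [h1]
    rw [integral_const_mul, integral_gpdf _ hτ, mul_one]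
  -- iterated integrals
  have hcovP : ∫ p : ℝ × ℝ, (c p.1 - Ec) * (p.2 - μY) * f2 p
      = ∫ x, (c x - Ec) * gpdf μX (σX ^ 2) x * (ρ * σY / σX * (x - μX)) := by
    rw [hprod, integral_prod _ hcov2]
    exact integral_congr_ae (Eventually.of_forall fun x => hinner_cov x)
  have hEder : ∫ p : ℝ × ℝ, deriv c p.1 * f2 p = ∫ x, deriv c x * gpdf μX (σX ^ 2) x := by
    rw [hprod, integral_prod _ hder2]
    exact integral_congr_ae (Eventually.of_forall fun x => hinner_der x)
  -- marginal integrability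
  have hmarg : Integrable
      (fun x => (c x - Ec) * gpdf μX (σX ^ 2) x * (ρ * σY / σX * (x - μX))) volume := by
    have h := hcov2.integral_prod_left
    exact h.congr (Eventually.of_forall fun x => hinner_cov x)
  have habs1 : Integrable (fun x => |deriv c x| * gpdf μX (σX ^ 2) x) volume := by
    have h := habs2.integral_prod_left
    exact h.congr (Eventually.of_forall fun x => hinner_abs x)
  rw [hcovval, hcovP, hderval, hEder]
  by_cases hρ0 : ρ = 0
  · simp [hρ0]
  · have hk : ρ * σY / σX ≠ 0 := by
      apply div_ne_zero (mul_ne_zero hρ0 (ne_of_gt hσY)) (ne_of_gt hσX)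
    have hsteinInt : Integrable
        (fun x => (c x - Ec) * (x - μX) * gpdf μX (σX ^ 2) x) volume := by
      have h := hmarg.const_mul (ρ * σY / σX)⁻¹
      apply h.congr (Eventually.of_forall fun x => ?_)
      field_simp
    have hstein := stein_one_dim hc hvX Ec hsteinInt habs1
    have hpull : ∫ x, (c x - Ec) * gpdf μX (σX ^ 2) x * (ρ * σY / σX * (x - μX))
        = (ρ * σY / σX) * ∫ x, (c x - Ec) * (x - μX) * gpdf μX (σX ^ 2) x := by
      rw [← integral_const_mul]
      congr 1
      funext x
      ring
    rw [hpull, hstein]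
    field_simp
end
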